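/- arXiv:1712.01331 — 3 statements merged into one kernel-verified Lean document; each statement's English description precedes it below -/
import Mathlib

section
/- Let τ be the Sol Laplacian τ(f) = e^{-2t} f_{xx} + e^{2t} f_{yy} + f_{tt}. For f₁(x,y,t) = a₁ + a₂x + a₃y + a₄xy and f₂(x,y,t) = b₁ + b₂x + b₃y + b₄xy with a, b ∈ ℂ⁴, and F(x,y,t) = t²·f₁(x,y,t) + t³·f₂(x,y,t), one has τ(F) = 2f₁ + 6t·f₂ and τ²(F) = 0. In particular, if (a,b) ≠ 0 then F is proper biharmonic. -/
noncomputable section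

/-- Partial derivative in the first (x) coordinate. -/
def p1 (f : ℝ → ℝ → ℝ → ℂ) : ℝ → ℝ → ℝ → ℂ := fun (x y t : ℝ) => deriv (fun s => f s y t) x
/-- Partial derivative in the second (y) coordinate. -/
def p2 (f : ℝ → ℝ → ℝ → ℂ) : ℝ → ℝ → ℝ → ℂ := fun (x y t : ℝ) => deriv (fun s => f x s t) y
/-- Partial derivative in the third (t) coordinate. -/
def p3 (f : ℝ → ℝ → ℝ → ℂ) : ℝ → ℝ → ℝ → ℂ := fun (x y t : ℝ) => deriv (fun s => f x y s) t

/-- The Laplace-Beltrami operator of the Sol geometry: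
`τ(f) = e^{-2t} f_xx + e^{2t} f_yy + f_tt`. -/
def solTau (f : ℝ → ℝ → ℝ → ℂ) : ℝ → ℝ → ℝ → ℂ := fun (x y t : ℝ) =>
  (Real.exp (-2*t) : ℂ) * p1 (p1 f) x y t
    + (Real.exp (2*t) : ℂ) * p2 (p2 f) x y t + p3 (p3 f) x y t

lemma hasDerivAt_ofReal' (x : ℝ) : HasDerivAt (fun s : ℝ => (s:ℂ)) 1 x := by
  simpa using (hasDerivAt_id x).ofReal_comp

/-- derivative of an affine complex-valued map of a real variable -/
lemma deriv_affine (c d : ℂ) (x : ℝ) :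
    deriv (fun s : ℝ => c + d * (s:ℂ)) x = d := by
  have h : HasDerivAt (fun s : ℝ => c + d * (s:ℂ)) d x := by
    simpa using ((hasDerivAt_ofReal' x).const_mul d).const_add c
  exact h.deriv

theorem sol_proper_biharmonic_family (a₁ a₂ a₃ a₄ b₁ b₂ b₃ b₄ : ℂ)
    (f₁ : ℝ → ℝ → ℝ → ℂ) (f₂ : ℝ → ℝ → ℝ → ℂ) (F : ℝ → ℝ → ℝ → ℂ)
    (hf₁ : f₁ = fun (x y t : ℝ) => a₁ + a₂ * (x : ℂ) + a₃ * (y : ℂ) + a₄ * (x : ℂ) * (y : ℂ))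
    (hf₂ : f₂ = fun (x y t : ℝ) => b₁ + b₂ * (x : ℂ) + b₃ * (y : ℂ) + b₄ * (x : ℂ) * (y : ℂ))
    (hF : F = fun (x y t : ℝ) => (t : ℂ) ^ 2 * f₁ x y t + (t : ℂ) ^ 3 * f₂ x y t) :
    solTau F = (fun x y t => 2 * f₁ x y t + 6 * (t : ℂ) * f₂ x y t)
      ∧ solTau (solTau F) = (fun _ _ _ => (0 : ℂ))
      ∧ ((a₁, a₂, a₃, a₄, b₁, b₂, b₃, b₄) ≠ (0, 0, 0, 0, 0, 0, 0, 0) →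
          solTau F ≠ fun _ _ _ => (0 : ℂ)) := by
  subst hf₁ hf₂ hF
  -- p1 F
  have hp1F : p1 (fun (x y t : ℝ) =>
      (t : ℂ) ^ 2 * (a₁ + a₂ * (x:ℂ) + a₃ * (y:ℂ) + a₄ * (x:ℂ) * (y:ℂ))
        + (t : ℂ) ^ 3 * (b₁ + b₂ * (x:ℂ) + b₃ * (y:ℂ) + b₄ * (x:ℂ) * (y:ℂ)))
      = fun (x y t : ℝ) =>
        (t:ℂ)^2 * (a₂ + a₄ * (y:ℂ)) + (t:ℂ)^3 * (b₂ + b₄ * (y:ℂ)) := by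
    funext x y t
    show deriv _ x = _
    have h : HasDerivAt (fun s : ℝ =>
        (t : ℂ) ^ 2 * (a₁ + a₂ * (s:ℂ) + a₃ * (y:ℂ) + a₄ * (s:ℂ) * (y:ℂ))
          + (t : ℂ) ^ 3 * (b₁ + b₂ * (s:ℂ) + b₃ * (y:ℂ) + b₄ * (s:ℂ) * (y:ℂ)))
        ((t:ℂ)^2 * (a₂ + a₄ * (y:ℂ)) + (t:ℂ)^3 * (b₂ + b₄ * (y:ℂ))) x := by
      have h0 := hasDerivAt_ofReal' x
      have hA : HasDerivAt (fun s : ℝ =>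
          a₁ + a₂ * (s:ℂ) + a₃ * (y:ℂ) + a₄ * (s:ℂ) * (y:ℂ)) (a₂ + a₄ * (y:ℂ)) x := by
        simpa [Pi.add_def] using (((h0.const_mul a₂).const_add a₁).add
          (hasDerivAt_const x (a₃ * (y:ℂ)))).add ((h0.const_mul a₄).mul_const (y:ℂ))
      have hB : HasDerivAt (fun s : ℝ =>
          b₁ + b₂ * (s:ℂ) + b₃ * (y:ℂ) + b₄ * (s:ℂ) * (y:ℂ)) (b₂ + b₄ * (y:ℂ)) x := by
        simpa [Pi.add_def] using (((h0.const_mul b₂).const_add b₁).add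
          (hasDerivAt_const x (b₃ * (y:ℂ)))).add ((h0.const_mul b₄).mul_const (y:ℂ))
      exact (hA.const_mul ((t:ℂ)^2)).add (hB.const_mul ((t:ℂ)^3))
    exact h.deriv
  -- p2 F
  have hp2F : p2 (fun (x y t : ℝ) =>
      (t : ℂ) ^ 2 * (a₁ + a₂ * (x:ℂ) + a₃ * (y:ℂ) + a₄ * (x:ℂ) * (y:ℂ))
        + (t : ℂ) ^ 3 * (b₁ + b₂ * (x:ℂ) + b₃ * (y:ℂ) + b₄ * (x:ℂ) * (y:ℂ)))
      = fun (x y t : ℝ) =>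
        (t:ℂ)^2 * (a₃ + a₄ * (x:ℂ)) + (t:ℂ)^3 * (b₃ + b₄ * (x:ℂ)) := by
    funext x y t
    show deriv _ y = _
    have h : HasDerivAt (fun s : ℝ =>
        (t : ℂ) ^ 2 * (a₁ + a₂ * (x:ℂ) + a₃ * (s:ℂ) + a₄ * (x:ℂ) * (s:ℂ))
          + (t : ℂ) ^ 3 * (b₁ + b₂ * (x:ℂ) + b₃ * (s:ℂ) + b₄ * (x:ℂ) * (s:ℂ)))
        ((t:ℂ)^2 * (a₃ + a₄ * (x:ℂ)) + (t:ℂ)^3 * (b₃ + b₄ * (x:ℂ))) y := by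
      have h0 := hasDerivAt_ofReal' y
      have hA : HasDerivAt (fun s : ℝ =>
          a₁ + a₂ * (x:ℂ) + a₃ * (s:ℂ) + a₄ * (x:ℂ) * (s:ℂ)) (a₃ + a₄ * (x:ℂ)) y := by
        simpa [mul_comm, Pi.add_def] using (((hasDerivAt_const y (a₁ + a₂ * (x:ℂ)))).add
          (h0.const_mul a₃)).add (h0.const_mul (a₄ * (x:ℂ)))
      have hB : HasDerivAt (fun s : ℝ =>
          b₁ + b₂ * (x:ℂ) + b₃ * (s:ℂ) + b₄ * (x:ℂ) * (s:ℂ)) (b₃ + b₄ * (x:ℂ)) y := by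
        simpa [mul_comm, Pi.add_def] using (((hasDerivAt_const y (b₁ + b₂ * (x:ℂ)))).add
          (h0.const_mul b₃)).add (h0.const_mul (b₄ * (x:ℂ)))
      exact (hA.const_mul ((t:ℂ)^2)).add (hB.const_mul ((t:ℂ)^3))
    exact h.deriv
  -- p3 F
  have hp3F : p3 (fun (x y t : ℝ) =>
      (t : ℂ) ^ 2 * (a₁ + a₂ * (x:ℂ) + a₃ * (y:ℂ) + a₄ * (x:ℂ) * (y:ℂ))
        + (t : ℂ) ^ 3 * (b₁ + b₂ * (x:ℂ) + b₃ * (y:ℂ) + b₄ * (x:ℂ) * (y:ℂ)))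
      = fun (x y t : ℝ) =>
        2 * (t:ℂ) * (a₁ + a₂ * (x:ℂ) + a₃ * (y:ℂ) + a₄ * (x:ℂ) * (y:ℂ))
          + 3 * (t:ℂ)^2 * (b₁ + b₂ * (x:ℂ) + b₃ * (y:ℂ) + b₄ * (x:ℂ) * (y:ℂ)) := by
    funext x y t
    show deriv _ t = _
    have h0 := hasDerivAt_ofReal' t
    have h : HasDerivAt (fun s : ℝ =>
        (s : ℂ) ^ 2 * (a₁ + a₂ * (x:ℂ) + a₃ * (y:ℂ) + a₄ * (x:ℂ) * (y:ℂ))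
          + (s : ℂ) ^ 3 * (b₁ + b₂ * (x:ℂ) + b₃ * (y:ℂ) + b₄ * (x:ℂ) * (y:ℂ)))
        (2 * (t:ℂ) * (a₁ + a₂ * (x:ℂ) + a₃ * (y:ℂ) + a₄ * (x:ℂ) * (y:ℂ))
          + 3 * (t:ℂ)^2 * (b₁ + b₂ * (x:ℂ) + b₃ * (y:ℂ) + b₄ * (x:ℂ) * (y:ℂ))) t := by
      have hsq : HasDerivAt (fun s : ℝ => (s:ℂ) * (s:ℂ)) ((t:ℂ) + (t:ℂ)) t := by
        simpa [Pi.mul_def] using h0.mul h0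
      have hcb : HasDerivAt (fun s : ℝ => (s:ℂ) * (s:ℂ) * (s:ℂ))
          (((t:ℂ) + (t:ℂ)) * (t:ℂ) + (t:ℂ) * (t:ℂ)) t := by
        simpa [Pi.mul_def] using hsq.mul h0
      have := (hsq.mul_const
          (a₁ + a₂ * (x:ℂ) + a₃ * (y:ℂ) + a₄ * (x:ℂ) * (y:ℂ))).add
        (hcb.mul_const (b₁ + b₂ * (x:ℂ) + b₃ * (y:ℂ) + b₄ * (x:ℂ) * (y:ℂ)))
      simp only [Pi.add_def] at this
      convert this using 2 <;> first | rfl | ring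
    exact h.deriv
  -- second x- and y-derivatives vanish
  have hp1p1 : p1 (p1 (fun (x y t : ℝ) =>
      (t : ℂ) ^ 2 * (a₁ + a₂ * (x:ℂ) + a₃ * (y:ℂ) + a₄ * (x:ℂ) * (y:ℂ))
        + (t : ℂ) ^ 3 * (b₁ + b₂ * (x:ℂ) + b₃ * (y:ℂ) + b₄ * (x:ℂ) * (y:ℂ))))
      = fun _ _ _ => (0:ℂ) := by
    rw [hp1F]
    funext x y t
    show deriv _ x = _
    exact deriv_const x _
  have hp2p2 : p2 (p2 (fun (x y t : ℝ) =>
      (t : ℂ) ^ 2 * (a₁ + a₂ * (x:ℂ) + a₃ * (y:ℂ) + a₄ * (x:ℂ) * (y:ℂ))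
        + (t : ℂ) ^ 3 * (b₁ + b₂ * (x:ℂ) + b₃ * (y:ℂ) + b₄ * (x:ℂ) * (y:ℂ))))
      = fun _ _ _ => (0:ℂ) := by
    rw [hp2F]
    funext x y t
    show deriv _ y = _
    exact deriv_const y _
  -- second t-derivative
  have hp3p3 : p3 (p3 (fun (x y t : ℝ) =>
      (t : ℂ) ^ 2 * (a₁ + a₂ * (x:ℂ) + a₃ * (y:ℂ) + a₄ * (x:ℂ) * (y:ℂ))
        + (t : ℂ) ^ 3 * (b₁ + b₂ * (x:ℂ) + b₃ * (y:ℂ) + b₄ * (x:ℂ) * (y:ℂ))))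
      = fun (x y t : ℝ) =>
        2 * (a₁ + a₂ * (x:ℂ) + a₃ * (y:ℂ) + a₄ * (x:ℂ) * (y:ℂ))
          + 6 * (t:ℂ) * (b₁ + b₂ * (x:ℂ) + b₃ * (y:ℂ) + b₄ * (x:ℂ) * (y:ℂ)) := by
    rw [hp3F]
    funext x y t
    show deriv _ t = _
    have h0 := hasDerivAt_ofReal' t
    have h : HasDerivAt (fun s : ℝ =>
        2 * (s:ℂ) * (a₁ + a₂ * (x:ℂ) + a₃ * (y:ℂ) + a₄ * (x:ℂ) * (y:ℂ))
          + 3 * (s:ℂ)^2 * (b₁ + b₂ * (x:ℂ) + b₃ * (y:ℂ) + b₄ * (x:ℂ) * (y:ℂ)))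
        (2 * (a₁ + a₂ * (x:ℂ) + a₃ * (y:ℂ) + a₄ * (x:ℂ) * (y:ℂ))
          + 6 * (t:ℂ) * (b₁ + b₂ * (x:ℂ) + b₃ * (y:ℂ) + b₄ * (x:ℂ) * (y:ℂ))) t := by
      have hsq : HasDerivAt (fun s : ℝ => (s:ℂ) * (s:ℂ)) ((t:ℂ) + (t:ℂ)) t := by
        simpa [Pi.mul_def] using h0.mul h0
      have := (((h0.const_mul (2:ℂ)).mul_const
          (a₁ + a₂ * (x:ℂ) + a₃ * (y:ℂ) + a₄ * (x:ℂ) * (y:ℂ))).add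
        ((hsq.const_mul (3:ℂ)).mul_const
          (b₁ + b₂ * (x:ℂ) + b₃ * (y:ℂ) + b₄ * (x:ℂ) * (y:ℂ))))
      simp only [Pi.add_def] at this
      convert this using 2 <;> first | rfl | ring
    exact h.deriv
  -- first conjunct
  have h1 : solTau (fun (x y t : ℝ) =>
      (t : ℂ) ^ 2 * (a₁ + a₂ * (x:ℂ) + a₃ * (y:ℂ) + a₄ * (x:ℂ) * (y:ℂ))
        + (t : ℂ) ^ 3 * (b₁ + b₂ * (x:ℂ) + b₃ * (y:ℂ) + b₄ * (x:ℂ) * (y:ℂ)))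
      = fun (x y t : ℝ) =>
        2 * (a₁ + a₂ * (x:ℂ) + a₃ * (y:ℂ) + a₄ * (x:ℂ) * (y:ℂ))
          + 6 * (t:ℂ) * (b₁ + b₂ * (x:ℂ) + b₃ * (y:ℂ) + b₄ * (x:ℂ) * (y:ℂ)) := by
    funext x y t
    show _ * p1 (p1 _) x y t + _ * p2 (p2 _) x y t + p3 (p3 _) x y t = _
    rw [hp1p1, hp2p2, hp3p3]
    simp
  refine ⟨h1, ?_, ?_⟩
  · rw [h1]
    -- compute solTau of the image function g
    have hp1g : p1 (fun (x y t : ℝ) =>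
        2 * (a₁ + a₂ * (x:ℂ) + a₃ * (y:ℂ) + a₄ * (x:ℂ) * (y:ℂ))
          + 6 * (t:ℂ) * (b₁ + b₂ * (x:ℂ) + b₃ * (y:ℂ) + b₄ * (x:ℂ) * (y:ℂ)))
        = fun (x y t : ℝ) =>
          2 * (a₂ + a₄ * (y:ℂ)) + 6 * (t:ℂ) * (b₂ + b₄ * (y:ℂ)) := by
      funext x y t
      show deriv _ x = _
      have h0 := hasDerivAt_ofReal' x
      have hA : HasDerivAt (fun s : ℝ =>
          a₁ + a₂ * (s:ℂ) + a₃ * (y:ℂ) + a₄ * (s:ℂ) * (y:ℂ)) (a₂ + a₄ * (y:ℂ)) x := by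
        simpa [Pi.add_def] using (((h0.const_mul a₂).const_add a₁).add
          (hasDerivAt_const x (a₃ * (y:ℂ)))).add ((h0.const_mul a₄).mul_const (y:ℂ))
      have hB : HasDerivAt (fun s : ℝ =>
          b₁ + b₂ * (s:ℂ) + b₃ * (y:ℂ) + b₄ * (s:ℂ) * (y:ℂ)) (b₂ + b₄ * (y:ℂ)) x := by
        simpa [Pi.add_def] using (((h0.const_mul b₂).const_add b₁).add
          (hasDerivAt_const x (b₃ * (y:ℂ)))).add ((h0.const_mul b₄).mul_const (y:ℂ))
      exact ((hA.const_mul (2:ℂ)).add (hB.const_mul (6 * (t:ℂ)))).deriv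
    have hp2g : p2 (fun (x y t : ℝ) =>
        2 * (a₁ + a₂ * (x:ℂ) + a₃ * (y:ℂ) + a₄ * (x:ℂ) * (y:ℂ))
          + 6 * (t:ℂ) * (b₁ + b₂ * (x:ℂ) + b₃ * (y:ℂ) + b₄ * (x:ℂ) * (y:ℂ)))
        = fun (x y t : ℝ) =>
          2 * (a₃ + a₄ * (x:ℂ)) + 6 * (t:ℂ) * (b₃ + b₄ * (x:ℂ)) := by
      funext x y t
      show deriv _ y = _
      have h0 := hasDerivAt_ofReal' y
      have hA : HasDerivAt (fun s : ℝ =>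
          a₁ + a₂ * (x:ℂ) + a₃ * (s:ℂ) + a₄ * (x:ℂ) * (s:ℂ)) (a₃ + a₄ * (x:ℂ)) y := by
        simpa [mul_comm, Pi.add_def] using (((hasDerivAt_const y (a₁ + a₂ * (x:ℂ)))).add
          (h0.const_mul a₃)).add (h0.const_mul (a₄ * (x:ℂ)))
      have hB : HasDerivAt (fun s : ℝ =>
          b₁ + b₂ * (x:ℂ) + b₃ * (s:ℂ) + b₄ * (x:ℂ) * (s:ℂ)) (b₃ + b₄ * (x:ℂ)) y := by
        simpa [mul_comm, Pi.add_def] using (((hasDerivAt_const y (b₁ + b₂ * (x:ℂ)))).add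
          (h0.const_mul b₃)).add (h0.const_mul (b₄ * (x:ℂ)))
      exact ((hA.const_mul (2:ℂ)).add (hB.const_mul (6 * (t:ℂ)))).deriv
    have hp3g : p3 (fun (x y t : ℝ) =>
        2 * (a₁ + a₂ * (x:ℂ) + a₃ * (y:ℂ) + a₄ * (x:ℂ) * (y:ℂ))
          + 6 * (t:ℂ) * (b₁ + b₂ * (x:ℂ) + b₃ * (y:ℂ) + b₄ * (x:ℂ) * (y:ℂ)))
        = fun (x y t : ℝ) =>
          6 * (b₁ + b₂ * (x:ℂ) + b₃ * (y:ℂ) + b₄ * (x:ℂ) * (y:ℂ)) := by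
      funext x y t
      show deriv _ t = _
      have h0 := hasDerivAt_ofReal' t
      have h : HasDerivAt (fun s : ℝ =>
          2 * (a₁ + a₂ * (x:ℂ) + a₃ * (y:ℂ) + a₄ * (x:ℂ) * (y:ℂ))
            + 6 * (s:ℂ) * (b₁ + b₂ * (x:ℂ) + b₃ * (y:ℂ) + b₄ * (x:ℂ) * (y:ℂ)))
          (6 * (b₁ + b₂ * (x:ℂ) + b₃ * (y:ℂ) + b₄ * (x:ℂ) * (y:ℂ))) t := by
        have := ((h0.const_mul (6:ℂ)).mul_const
            (b₁ + b₂ * (x:ℂ) + b₃ * (y:ℂ) + b₄ * (x:ℂ) * (y:ℂ))).const_add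
          (2 * (a₁ + a₂ * (x:ℂ) + a₃ * (y:ℂ) + a₄ * (x:ℂ) * (y:ℂ)))
        exact this.congr_deriv (by ring)
      exact h.deriv
    funext x y t
    show _ * p1 (p1 _) x y t + _ * p2 (p2 _) x y t + p3 (p3 _) x y t = _
    have e1 : p1 (p1 (fun (x y t : ℝ) =>
        2 * (a₁ + a₂ * (x:ℂ) + a₃ * (y:ℂ) + a₄ * (x:ℂ) * (y:ℂ))
          + 6 * (t:ℂ) * (b₁ + b₂ * (x:ℂ) + b₃ * (y:ℂ) + b₄ * (x:ℂ) * (y:ℂ))))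
        x y t = 0 := by
      rw [hp1g]; exact deriv_const x _
    have e2 : p2 (p2 (fun (x y t : ℝ) =>
        2 * (a₁ + a₂ * (x:ℂ) + a₃ * (y:ℂ) + a₄ * (x:ℂ) * (y:ℂ))
          + 6 * (t:ℂ) * (b₁ + b₂ * (x:ℂ) + b₃ * (y:ℂ) + b₄ * (x:ℂ) * (y:ℂ))))
        x y t = 0 := by
      rw [hp2g]; exact deriv_const y _
    have e3 : p3 (p3 (fun (x y t : ℝ) =>
        2 * (a₁ + a₂ * (x:ℂ) + a₃ * (y:ℂ) + a₄ * (x:ℂ) * (y:ℂ))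
          + 6 * (t:ℂ) * (b₁ + b₂ * (x:ℂ) + b₃ * (y:ℂ) + b₄ * (x:ℂ) * (y:ℂ))))
        x y t = 0 := by
      rw [hp3g]; exact deriv_const t _
    rw [e1, e2, e3]
    simp
  · intro hne h
    rw [h1] at h
    apply hne
    have E : ∀ (x y t : ℝ),
        2 * (a₁ + a₂ * (x:ℂ) + a₃ * (y:ℂ) + a₄ * (x:ℂ) * (y:ℂ))
          + 6 * (t:ℂ) * (b₁ + b₂ * (x:ℂ) + b₃ * (y:ℂ) + b₄ * (x:ℂ) * (y:ℂ)) = 0 := by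
      intro x y t
      exact congrFun (congrFun (congrFun h x) y) t
    have E000 := E 0 0 0
    have E100 := E 1 0 0
    have E010 := E 0 1 0
    have E110 := E 1 1 0
    have E001 := E 0 0 1
    have E101 := E 1 0 1
    have E011 := E 0 1 1
    have E111 := E 1 1 1
    push_cast at E000 E100 E010 E110 E001 E101 E011 E111
    simp only [Prod.mk.injEq]
    refine ⟨?_, ?_, ?_, ?_, ?_, ?_, ?_, ?_⟩
    · linear_combination E000 / 2
    · linear_combination E100 / 2 - E000 / 2
    · linear_combination E010 / 2 - E000 / 2
    · linear_combination E110 / 2 + E000 / 2 - E100 / 2 - E010 / 2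
    · linear_combination E001 / 6 - E000 / 6
    · linear_combination E101 / 6 - E001 / 6 - E100 / 6 + E000 / 6
    · linear_combination E011 / 6 - E001 / 6 - E010 / 6 + E000 / 6
    · linear_combination E111 / 6 - E011 / 6 - E101 / 6 + E001 / 6
        - E110 / 6 + E010 / 6 + E100 / 6 - E000 / 6
end
end

section
/- On the punctured sphere P modelled as ℂ with the metric ds² = 4(dx²+dy²)/(1+x²+y²)² of constant curvature +1, whose Laplace–Beltrami operator is τ(f) = 4(1+z z̄)² ∂²f/∂z∂z̄ (up to the conformal factor, τ(f) = ((1+|z|²)²/4)(f_{xx}+f_{yy})·4), the function F(z) = log(1 + |z|²) satisfies τ(F) = 4 and τ²(F) = 0; i.e., F is proper biharmonic on P. -/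
noncomputable section

/-- Second partial derivative in the real direction, for functions on `ℂ`. -/
def dxx (f : ℂ → ℂ) (z : ℂ) : ℂ := fderiv ℝ (fun w => fderiv ℝ f w 1) z 1
/-- Second partial derivative in the imaginary direction, for functions on `ℂ`. -/
def dyy (f : ℂ → ℂ) (z : ℂ) : ℂ :=
  fderiv ℝ (fun w => fderiv ℝ f w Complex.I) z Complex.I

/-- The Laplace-Beltrami operator of the punctured sphere, modelled as `ℂ` with the
metric `4(dx²+dy²)/(1+x²+y²)²`:
`τ(f)(z) = (1 + |z|²)² (f_xx + f_yy)(z) = 4 (1 + z z̄)² ∂²f/∂z∂z̄`. -/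
def sphTau (f : ℂ → ℂ) (z : ℂ) : ℂ :=
  (((1 + ‖z‖ ^ 2) ^ 2 : ℝ) : ℂ) * (dxx f z + dyy f z)

namespace SphereLogAux

/-- `h z = 1 + |z|²` as a real-valued function. -/
def h (z : ℂ) : ℝ := 1 + (z.re ^ 2 + z.im ^ 2)

lemma h_pos (z : ℂ) : 0 < h z := by
  have := sq_nonneg z.re; have := sq_nonneg z.im; unfold h; nlinarith

lemma h_ne (z : ℂ) : h z ≠ 0 := (h_pos z).ne'

lemma norm_sq_eq (z : ℂ) : ‖z‖ ^ 2 = z.re ^ 2 + z.im ^ 2 := by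
  simp [← Complex.normSq_eq_norm_sq, Complex.normSq_apply]
  ring

/-- The derivative of `h`. -/
def Lz (z : ℂ) : ℂ →L[ℝ] ℝ := (2 * z.re) • Complex.reCLM + (2 * z.im) • Complex.imCLM

lemma hre (z : ℂ) : HasFDerivAt (fun w : ℂ => w.re) Complex.reCLM z :=
  Complex.reCLM.hasFDerivAt

lemma him (z : ℂ) : HasFDerivAt (fun w : ℂ => w.im) Complex.imCLM z :=
  Complex.imCLM.hasFDerivAt

lemma h_hasFDerivAt (z : ℂ) : HasFDerivAt h (Lz z) z := by
  have h1 : HasFDerivAt (fun w : ℂ => w.re * w.re + w.im * w.im)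
      ((z.re • Complex.reCLM + z.re • Complex.reCLM) +
        (z.im • Complex.imCLM + z.im • Complex.imCLM)) z :=
    ((hre z).mul (hre z)).add ((him z).mul (him z))
  have h2 := (hasFDerivAt_const (1 : ℝ) z).add h1
  have : HasFDerivAt h (0 + ((z.re • Complex.reCLM + z.re • Complex.reCLM) +
      (z.im • Complex.imCLM + z.im • Complex.imCLM))) z := by
    have e : h = fun w : ℂ => 1 + (w.re * w.re + w.im * w.im) := by
      funext w; unfold h; ring
    rw [e]; exact h2
  convert this using 1
  ext w <;> simp [Lz] <;> ring

/-- derivative of `w ↦ (h w)⁻¹`. -/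
lemma hinv_hasFDerivAt (z : ℂ) :
    HasFDerivAt (fun w => (h w)⁻¹) ((-(h z ^ 2)⁻¹) • Lz z) z :=
  (hasDerivAt_inv (h_ne z)).comp_hasFDerivAt z (h_hasFDerivAt z)

/-- First derivative of `F w = log (h w)` (real-valued). -/
lemma logh_hasFDerivAt (z : ℂ) :
    HasFDerivAt (fun w => Real.log (h w)) ((h z)⁻¹ • Lz z) z :=
  (h_hasFDerivAt z).log (h_ne z)

/-- The complexified function. -/
def F (w : ℂ) : ℂ := (Real.log (h w) : ℂ)

lemma F_hasFDerivAt (z : ℂ) :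
    HasFDerivAt F (Complex.ofRealCLM.comp ((h z)⁻¹ • Lz z)) z :=
  Complex.ofRealCLM.hasFDerivAt.comp z (logh_hasFDerivAt z)

lemma fderiv_F (z : ℂ) (v : ℂ) :
    fderiv ℝ F z v = ((h z)⁻¹ * (2 * z.re * v.re + 2 * z.im * v.im) : ℝ) := by
  rw [(F_hasFDerivAt z).fderiv]
  simp [Lz]; ring

/-- Derivative of `w ↦ (h w)⁻¹ * (2*w.re)` style products, generic form:
`w ↦ (h w)⁻¹ * c w` where `c` is ℝ-linear-ish. We do the two cases directly. -/
lemma px_hasFDerivAt (z : ℂ) :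
    HasFDerivAt (fun w : ℂ => (h w)⁻¹ * (2 * w.re))
      (((h z)⁻¹ • ((2:ℝ) • Complex.reCLM)) + (2 * z.re) • ((-(h z ^ 2)⁻¹) • Lz z)) z := by
  have hc : HasFDerivAt (fun w : ℂ => 2 * w.re) ((2:ℝ) • Complex.reCLM) z := by
    exact (hre z).const_mul (2:ℝ)
  exact (hinv_hasFDerivAt z).mul hc

lemma py_hasFDerivAt (z : ℂ) :
    HasFDerivAt (fun w : ℂ => (h w)⁻¹ * (2 * w.im))
      (((h z)⁻¹ • ((2:ℝ) • Complex.imCLM)) + (2 * z.im) • ((-(h z ^ 2)⁻¹) • Lz z)) z := by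
  have hc : HasFDerivAt (fun w : ℂ => 2 * w.im) ((2:ℝ) • Complex.imCLM) z := by
    exact (him z).const_mul (2:ℝ)
  exact (hinv_hasFDerivAt z).mul hc

lemma dxx_F (z : ℂ) :
    dxx F z = (((h z)⁻¹ * 2 + (2 * z.re) * (-(h z ^ 2)⁻¹ * (2 * z.re)) : ℝ) : ℂ) := by
  unfold dxx
  have hfun : (fun w => fderiv ℝ F w 1) = fun w : ℂ => ((((h w)⁻¹ * (2 * w.re)) : ℝ) : ℂ) := by
    funext w; rw [fderiv_F]; norm_num
  rw [hfun]
  have hD := Complex.ofRealCLM.hasFDerivAt.comp z (px_hasFDerivAt z)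
  rw [show (fun w : ℂ => ((((h w)⁻¹ * (2 * w.re)) : ℝ) : ℂ))
      = ⇑Complex.ofRealCLM ∘ (fun w => (h w)⁻¹ * (2 * w.re)) from rfl, hD.fderiv]
  simp [Lz]

lemma dyy_F (z : ℂ) :
    dyy F z = (((h z)⁻¹ * 2 + (2 * z.im) * (-(h z ^ 2)⁻¹ * (2 * z.im)) : ℝ) : ℂ) := by
  unfold dyy
  have hfun : (fun w => fderiv ℝ F w Complex.I)
      = fun w : ℂ => ((((h w)⁻¹ * (2 * w.im)) : ℝ) : ℂ) := by
    funext w; rw [fderiv_F]; simp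
  rw [hfun]
  have hD := Complex.ofRealCLM.hasFDerivAt.comp z (py_hasFDerivAt z)
  rw [show (fun w : ℂ => ((((h w)⁻¹ * (2 * w.im)) : ℝ) : ℂ))
      = ⇑Complex.ofRealCLM ∘ (fun w => (h w)⁻¹ * (2 * w.im)) from rfl, hD.fderiv]
  simp [Lz]

lemma tau_F : sphTau F = fun _ => (4 : ℂ) := by
  funext z
  unfold sphTau
  rw [dxx_F, dyy_F, norm_sq_eq]
  have hne := h_ne z
  have hx : (1 : ℝ) + (z.re ^ 2 + z.im ^ 2) = h z := rfl
  push_cast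
  rw [show ((1:ℂ) + ((z.re:ℂ) ^ 2 + (z.im:ℂ) ^ 2)) = ((h z : ℝ) : ℂ) by
    unfold h; push_cast; ring]
  have hne' : ((h z : ℝ) : ℂ) ≠ 0 := by exact_mod_cast hne
  field_simp
  unfold h; push_cast; ring

end SphereLogAux

theorem sphere_log_proper_biharmonic :
    sphTau (fun w => (↑(Real.log (1 + ‖w‖ ^ 2)) : ℂ)) = (fun _ => (4 : ℂ)) ∧
    sphTau (sphTau (fun w => (↑(Real.log (1 + ‖w‖ ^ 2)) : ℂ))) = fun _ => (0 : ℂ) := by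
  have hFeq : (fun w : ℂ => (↑(Real.log (1 + ‖w‖ ^ 2)) : ℂ)) = SphereLogAux.F := by
    funext w
    rw [SphereLogAux.norm_sq_eq]
    rfl
  rw [hFeq, SphereLogAux.tau_F]
  refine ⟨rfl, ?_⟩
  funext z
  simp [sphTau, dxx, dyy]
end
end

section
/- Let τ be the Laplacian of H² × ℝ, acting on smooth functions of (z,t) ∈ H² × ℝ by τ(F) = 4(1−zz̄)² ∂²F/∂z∂z̄ + ∂²F/∂t². If f, g : H² → ℂ are holomorphic and p(t) = b₀ + b₁t + b₂t² + b₃t³ with (b₂,b₃) ≠ 0, then F(z,t) = (f(z) + g(z̄))·p(t) satisfies τ²(F) = 0 and τ(F)(z,t) = (f(z)+g(z̄))·(2b₂ + 6b₃t); in particular F is proper biharmonic whenever f + g∘conj is not identically zero. -/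
noncomputable section

/-- The Laplace-Beltrami operator of `H² × ℝ`:
`τ(F)(z,t) = 4(1-zz̄)² ∂²F/∂z∂z̄ + ∂²F/∂t²
           = (1-|z|²)²(F_xx + F_yy) + F_tt`. -/
def h2rTau (F : ℂ → ℝ → ℂ) (z : ℂ) (t : ℝ) : ℂ :=
  (((1 - ‖z‖ ^ 2) ^ 2 : ℝ) : ℂ) * (dxx (fun w => F w t) z + dyy (fun w => F w t) z)
    + deriv (fun s => deriv (fun s' => F z s') s) t

open Complex Filter

lemma disc_open : IsOpen {z : ℂ | ‖z‖ < 1} := isOpen_lt continuous_norm continuous_const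

lemma conj_mem {z : ℂ} (hz : ‖z‖ < 1) : ‖(starRingEnd ℂ) z‖ < 1 := by
  simpa using hz

lemma key_hasFDerivAt (f g : ℂ → ℂ) {z : ℂ}
    (hfz : DifferentiableAt ℂ f z) (hgz : DifferentiableAt ℂ g ((starRingEnd ℂ) z)) (c : ℂ) :
    HasFDerivAt (fun w => (f w + g ((starRingEnd ℂ) w)) * c)
      ((deriv f z * c) • ContinuousLinearMap.id ℝ ℂ
        + (deriv g ((starRingEnd ℂ) z) * c) • Complex.conjCLE.toContinuousLinearMap) z := by
  have h1 : HasFDerivAt f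
      ((ContinuousLinearMap.smulRight (1 : ℂ →L[ℂ] ℂ) (deriv f z)).restrictScalars ℝ) z :=
    (hfz.hasDerivAt.hasFDerivAt).restrictScalars ℝ
  have hc : HasFDerivAt (fun w : ℂ => (starRingEnd ℂ) w)
      Complex.conjCLE.toContinuousLinearMap z :=
    Complex.conjCLE.toContinuousLinearMap.hasFDerivAt
  have h2 := (((hgz.hasDerivAt.hasFDerivAt).restrictScalars ℝ).comp z hc)
  have h3 := (h1.add h2).mul_const c
  convert h3 using 1
  · rfl
  · rfl
  · rfl
  ext v
  simp [ContinuousLinearMap.smulRight_apply, Complex.conjCLE_apply, smul_eq_mul]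
  ring

lemma key_fderiv (f g : ℂ → ℂ) {z : ℂ}
    (hfz : DifferentiableAt ℂ f z) (hgz : DifferentiableAt ℂ g ((starRingEnd ℂ) z)) (c v : ℂ) :
    fderiv ℝ (fun w => (f w + g ((starRingEnd ℂ) w)) * c) z v
      = (v * deriv f z + (starRingEnd ℂ) v * deriv g ((starRingEnd ℂ) z)) * c := by
  rw [(key_hasFDerivAt f g hfz hgz c).fderiv]
  simp [Complex.conjCLE_apply, smul_eq_mul]
  ring

lemma dxx_congr {F₁ F₂ : ℂ → ℂ} {z : ℂ} (h : F₁ =ᶠ[nhds z] F₂) : dxx F₁ z = dxx F₂ z := by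
  have h1 : (fun w => fderiv ℝ F₁ w 1) =ᶠ[nhds z] (fun w => fderiv ℝ F₂ w 1) :=
    (h.fderiv (𝕜 := ℝ)).mono fun w hw => by simp only [hw]
  unfold dxx
  rw [h1.fderiv_eq (𝕜 := ℝ)]

lemma dyy_congr {F₁ F₂ : ℂ → ℂ} {z : ℂ} (h : F₁ =ᶠ[nhds z] F₂) : dyy F₁ z = dyy F₂ z := by
  have h1 : (fun w => fderiv ℝ F₁ w Complex.I) =ᶠ[nhds z] (fun w => fderiv ℝ F₂ w Complex.I) :=
    (h.fderiv (𝕜 := ℝ)).mono fun w hw => by simp only [hw]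
  unfold dyy
  rw [h1.fderiv_eq (𝕜 := ℝ)]

lemma h2rTau_congr {F G : ℂ → ℝ → ℂ} {z : ℂ} {t : ℝ}
    (hx : (fun w => F w t) =ᶠ[nhds z] (fun w => G w t))
    (ht : (fun s' : ℝ => F z s') = fun s' : ℝ => G z s') :
    h2rTau F z t = h2rTau G z t := by
  unfold h2rTau
  rw [dxx_congr hx, dyy_congr hx, ht]

lemma lap_zero (f g : ℂ → ℂ)
    (hf : DifferentiableOn ℂ f {z : ℂ | ‖z‖ < 1})
    (hg : DifferentiableOn ℂ g {z : ℂ | ‖z‖ < 1})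
    (c : ℂ) {z : ℂ} (hz : ‖z‖ < 1) :
    dxx (fun w => (f w + g ((starRingEnd ℂ) w)) * c) z
      + dyy (fun w => (f w + g ((starRingEnd ℂ) w)) * c) z = 0 := by
  have hf' : DifferentiableOn ℂ (deriv f) {z : ℂ | ‖z‖ < 1} :=
    ((hf.analyticOnNhd disc_open).deriv).differentiableOn
  have hg' : DifferentiableOn ℂ (deriv g) {z : ℂ | ‖z‖ < 1} :=
    ((hg.analyticOnNhd disc_open).deriv).differentiableOn
  have hmem : {z : ℂ | ‖z‖ < 1} ∈ nhds z := disc_open.mem_nhds hz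
  have dAt : ∀ (F : ℂ → ℂ), DifferentiableOn ℂ F {z : ℂ | ‖z‖ < 1} →
      ∀ {w : ℂ}, ‖w‖ < 1 → DifferentiableAt ℂ F w := fun F hF _ hw =>
    hF.differentiableAt (disc_open.mem_nhds hw)
  -- dxx
  have e1 : (fun w => fderiv ℝ (fun w => (f w + g ((starRingEnd ℂ) w)) * c) w 1)
      =ᶠ[nhds z] (fun w => (deriv f w + deriv g ((starRingEnd ℂ) w)) * c) := by
    filter_upwards [hmem] with w hw
    rw [key_fderiv f g (dAt f hf hw) (dAt g hg (conj_mem hw)) c 1]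
    simp
  have dxxeq : dxx (fun w => (f w + g ((starRingEnd ℂ) w)) * c) z
      = (1 * deriv (deriv f) z + 1 * deriv (deriv g) ((starRingEnd ℂ) z)) * c := by
    simp only [dxx] at *
    rw [e1.fderiv_eq (𝕜 := ℝ), key_fderiv (deriv f) (deriv g) (dAt _ hf' hz) (dAt _ hg' (conj_mem hz)) c 1]
    simp
  -- dyy
  have e2 : (fun w => fderiv ℝ (fun w => (f w + g ((starRingEnd ℂ) w)) * c) w Complex.I)
      =ᶠ[nhds z] (fun w => (deriv f w + (fun u => -deriv g u) ((starRingEnd ℂ) w))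
        * (Complex.I * c)) := by
    filter_upwards [hmem] with w hw
    rw [key_fderiv f g (dAt f hf hw) (dAt g hg (conj_mem hw)) c Complex.I]
    simp only [Complex.conj_I]
    ring
  have dyyeq : dyy (fun w => (f w + g ((starRingEnd ℂ) w)) * c) z
      = (Complex.I * deriv (deriv f) z
          + (starRingEnd ℂ) Complex.I * deriv (fun u => -deriv g u) ((starRingEnd ℂ) z))
        * (Complex.I * c) := by
    simp only [dyy] at *
    rw [e2.fderiv_eq (𝕜 := ℝ), key_fderiv (deriv f) (fun u => -deriv g u) (dAt _ hf' hz)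
      ((dAt _ hg' (conj_mem hz)).neg) (Complex.I * c) Complex.I]
  rw [dxxeq, dyyeq, Complex.conj_I, deriv.fun_neg]
  linear_combination ((deriv (deriv f) z + deriv (deriv g) ((starRingEnd ℂ) z)) * c)
    * Complex.I_mul_I

lemma poly_hasDerivAt (a b c d : ℂ) (t : ℝ) :
    HasDerivAt (fun s : ℝ => a + b * (s : ℂ) + c * (s : ℂ) ^ 2 + d * (s : ℂ) ^ 3)
      (b + 2 * c * (t : ℂ) + 3 * d * (t : ℂ) ^ 2) t := by
  have hr : HasDerivAt (fun s : ℝ => (s : ℂ)) 1 t := Complex.ofRealCLM.hasDerivAt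
  have h0 := hasDerivAt_const t a
  have hb' := hr.const_mul b
  have hc' := (hr.mul hr).const_mul c
  have hd' := ((hr.mul hr).mul hr).const_mul d
  have h := (((h0.add hb').add hc').add hd' )
  convert h using 1
  · rfl
  · funext s; simp; ring
  · simp; ring

lemma t_part (h b₀ b₁ b₂ b₃ : ℂ) (t : ℝ) :
    deriv (fun s => deriv (fun s' : ℝ =>
        h * (b₀ + b₁ * (s' : ℂ) + b₂ * (s' : ℂ) ^ 2 + b₃ * (s' : ℂ) ^ 3)) s) t
      = h * (2 * b₂ + 6 * b₃ * (t : ℂ)) := by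
  have e : (fun s : ℝ => deriv (fun s' : ℝ =>
      h * (b₀ + b₁ * (s' : ℂ) + b₂ * (s' : ℂ) ^ 2 + b₃ * (s' : ℂ) ^ 3)) s)
      = fun s : ℝ => h * (b₁ + 2 * b₂ * (s : ℂ) + 3 * b₃ * (s : ℂ) ^ 2) :=
    funext fun s => ((poly_hasDerivAt b₀ b₁ b₂ b₃ s).const_mul h).deriv
  rw [e]
  have h2 : HasDerivAt (fun s : ℝ => h * (b₁ + 2 * b₂ * (s : ℂ) + 3 * b₃ * (s : ℂ) ^ 2))
      (h * (2 * b₂ + 6 * b₃ * (t : ℂ))) t := by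
    have h3 := (poly_hasDerivAt b₁ (2 * b₂) (3 * b₃) 0 t).const_mul h
    convert h3 using 1
    · rfl
    · funext s; ring
    · ring
  exact h2.deriv

lemma tau_eval (f g : ℂ → ℂ)
    (hf : DifferentiableOn ℂ f {z : ℂ | ‖z‖ < 1})
    (hg : DifferentiableOn ℂ g {z : ℂ | ‖z‖ < 1})
    (b₀ b₁ b₂ b₃ : ℂ) {z : ℂ} (hz : ‖z‖ < 1) (t : ℝ) :
    h2rTau (fun (w : ℂ) (s : ℝ) => (f w + g ((starRingEnd ℂ) w)) *
        (b₀ + b₁ * (s : ℂ) + b₂ * (s : ℂ) ^ 2 + b₃ * (s : ℂ) ^ 3)) z t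
      = (f z + g ((starRingEnd ℂ) z)) * (2 * b₂ + 6 * b₃ * (t : ℂ)) := by
  unfold h2rTau
  rw [lap_zero f g hf hg _ hz, t_part]
  ring

theorem h2_times_r_proper_biharmonic (f g : ℂ → ℂ)
    (hf : DifferentiableOn ℂ f {z : ℂ | ‖z‖ < 1})
    (hg : DifferentiableOn ℂ g {z : ℂ | ‖z‖ < 1})
    (b₀ b₁ b₂ b₃ : ℂ) (hb : (b₂, b₃) ≠ (0, 0))
    (F : ℂ → ℝ → ℂ)
    (hF : F = fun (z : ℂ) (t : ℝ) => (f z + g (starRingEnd ℂ z)) *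
      (b₀ + b₁ * (t : ℂ) + b₂ * (t : ℂ) ^ 2 + b₃ * (t : ℂ) ^ 3)) :
    (∀ z : ℂ, ‖z‖ < 1 → ∀ t : ℝ,
        h2rTau F z t = (f z + g (starRingEnd ℂ z)) * (2 * b₂ + 6 * b₃ * (t : ℂ)))
      ∧ (∀ z : ℂ, ‖z‖ < 1 → ∀ t : ℝ, h2rTau (fun w s => h2rTau F w s) z t = 0)
      ∧ ((¬ ∀ z : ℂ, ‖z‖ < 1 → f z + g (starRingEnd ℂ z) = 0) →
          ¬ ∀ z : ℂ, ‖z‖ < 1 → ∀ t : ℝ, h2rTau F z t = 0) := by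
  subst hF
  have part1 : ∀ z : ℂ, ‖z‖ < 1 → ∀ t : ℝ,
      h2rTau (fun (z : ℂ) (t : ℝ) => (f z + g (starRingEnd ℂ z)) *
        (b₀ + b₁ * (t : ℂ) + b₂ * (t : ℂ) ^ 2 + b₃ * (t : ℂ) ^ 3)) z t
      = (f z + g (starRingEnd ℂ z)) * (2 * b₂ + 6 * b₃ * (t : ℂ)) :=
    fun z hz t => tau_eval f g hf hg b₀ b₁ b₂ b₃ hz t
  refine ⟨part1, ?_, ?_⟩
  · intro z hz t
    set F := fun (z : ℂ) (t : ℝ) => (f z + g (starRingEnd ℂ z)) *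
      (b₀ + b₁ * (t : ℂ) + b₂ * (t : ℂ) ^ 2 + b₃ * (t : ℂ) ^ 3) with hFdef
    set G := fun (w : ℂ) (s : ℝ) => (f w + g (starRingEnd ℂ w)) *
      ((2 * b₂) + (6 * b₃) * (s : ℂ) + 0 * (s : ℂ) ^ 2 + 0 * (s : ℂ) ^ 3) with hGdef
    have hTG : h2rTau (fun w s => h2rTau F w s) z t = h2rTau G z t := by
      have hx : ∀ s : ℝ, (fun w => h2rTau F w s) =ᶠ[nhds z] (fun w => G w s) := by
        intro s
        filter_upwards [disc_open.mem_nhds hz] with w hw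
        rw [part1 w hw s, hGdef]
        ring
      have ht : (fun s' : ℝ => h2rTau F z s') = fun s' : ℝ => G z s' := by
        funext s'
        rw [part1 z hz s', hGdef]
        ring
      exact h2rTau_congr (hx t) ht
    rw [hTG, tau_eval f g hf hg (2 * b₂) (6 * b₃) 0 0 hz t]
    ring
  · intro hne htau
    apply hne
    intro z hz
    by_contra hzne
    have hb2 : b₂ = 0 := by
      have := htau z hz 0
      rw [part1 z hz 0] at this
      have h0 : (2 * b₂ + 6 * b₃ * ((0 : ℝ) : ℂ)) = 0 := by
        rcases mul_eq_zero.mp this with h | h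
        · exact absurd h hzne
        · exact h
      simpa using h0
    have hb3 : b₃ = 0 := by
      have := htau z hz 1
      rw [part1 z hz 1] at this
      have h0 : (2 * b₂ + 6 * b₃ * ((1 : ℝ) : ℂ)) = 0 := by
        rcases mul_eq_zero.mp this with h | h
        · exact absurd h hzne
        · exact h
      rw [hb2] at h0
      simpa using h0
    exact hb (by rw [hb2, hb3])
end
end
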